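/- The function α : ℝ₊ × ℝ₊ → ℝ defined by α(a,b) = (a - b)·(log a - log b) is jointly convex on (0,∞) × (0,∞). -/

import Mathlib

open Real

lemma pos_comb {a b y1 y2 : ℝ} (ha : 0 ≤ a) (hb : 0 ≤ b) (hab : a + b = 1)
    (hy1 : 0 < y1) (hy2 : 0 < y2) : 0 < a*y1+b*y2 := by
  rcases eq_or_lt_of_le ha with h|h
  · have hb1 : b = 1 := by linarith
    simp [← h, hb1, hy2]
  · exact add_pos_of_pos_of_nonneg (mul_pos h hy1) (mul_nonneg hb hy2.le)

lemma logsum2 (x1 y1 x2 y2 a b : ℝ) (hx1 : 0 < x1) (hy1 : 0 < y1) (hx2 : 0 < x2)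
    (hy2 : 0 < y2) (ha : 0 ≤ a) (hb : 0 ≤ b) (hab : a + b = 1) :
    (a*x1+b*x2) * Real.log ((a*x1+b*x2)/(a*y1+b*y2)) ≤
      a*(x1*Real.log (x1/y1)) + b*(x2*Real.log (x2/y2)) := by
  have hs : 0 < a*y1+b*y2 := pos_comb ha hb hab hy1 hy2
  have hw1 : 0 ≤ a*y1/(a*y1+b*y2) := by positivity
  have hw2 : 0 ≤ b*y2/(a*y1+b*y2) := by positivity
  have hwsum : a*y1/(a*y1+b*y2) + b*y2/(a*y1+b*y2) = 1 := by
    field_simp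
  have h1 : (x1/y1 : ℝ) ∈ Set.Ici (0:ℝ) := Set.mem_Ici.2 (by positivity)
  have h2 : (x2/y2 : ℝ) ∈ Set.Ici (0:ℝ) := Set.mem_Ici.2 (by positivity)
  have key := Real.convexOn_mul_log.2 h1 h2 hw1 hw2 hwsum
  simp only [smul_eq_mul] at key
  have hcomb : a*y1/(a*y1+b*y2) * (x1/y1) + b*y2/(a*y1+b*y2) * (x2/y2)
      = (a*x1+b*x2)/(a*y1+b*y2) := by
    field_simp
  rw [hcomb] at key
  have := mul_le_mul_of_nonneg_left key hs.le
  calc (a*x1+b*x2) * Real.log ((a*x1+b*x2)/(a*y1+b*y2))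
      = (a*y1+b*y2) * ((a*x1+b*x2)/(a*y1+b*y2) * Real.log ((a*x1+b*x2)/(a*y1+b*y2))) := by
        field_simp
    _ ≤ (a*y1+b*y2) * (a*y1/(a*y1+b*y2) * (x1/y1 * Real.log (x1/y1))
          + b*y2/(a*y1+b*y2) * (x2/y2 * Real.log (x2/y2))) := this
    _ = a*(x1*Real.log (x1/y1)) + b*(x2*Real.log (x2/y2)) := by
        field_simp

/-- `α(a,b) = (a-b)(log a - log b)` is jointly convex on `(0,∞) × (0,∞)`. -/
theorem convexOn_sub_mul_log_sub :
    ConvexOn ℝ {p : ℝ × ℝ | 0 < p.1 ∧ 0 < p.2}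
      (fun p : ℝ × ℝ => (p.1 - p.2) * (Real.log p.1 - Real.log p.2)) := by
  constructor
  · have : {p : ℝ × ℝ | 0 < p.1 ∧ 0 < p.2} = (Set.Ioi 0) ×ˢ (Set.Ioi 0) := rfl
    rw [this]; exact (convex_Ioi 0).prod (convex_Ioi 0)
  rintro ⟨x1, y1⟩ ⟨hx1, hy1⟩ ⟨x2, y2⟩ ⟨hx2, hy2⟩ a b ha hb hab
  simp only [Prod.smul_mk, Prod.mk_add_mk, smul_eq_mul] at *
  have hrw : ∀ x y : ℝ, 0 < x → 0 < y →
      (x - y) * (Real.log x - Real.log y)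
        = x * Real.log (x/y) + y * Real.log (y/x) := by
    intro x y hx hy
    rw [Real.log_div hx.ne' hy.ne', Real.log_div hy.ne' hx.ne']
    ring
  rw [hrw _ _ (pos_comb ha hb hab hx1 hx2) (pos_comb ha hb hab hy1 hy2),
    hrw _ _ hx1 hy1, hrw _ _ hx2 hy2]
  have H1 := logsum2 x1 y1 x2 y2 a b hx1 hy1 hx2 hy2 ha hb hab
  have H2 := logsum2 y1 x1 y2 x2 a b hy1 hx1 hy2 hx2 ha hb hab
  nlinarith [H1, H2]
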